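/- For each n-element subset D = {(a_1,b_1),...,(a_n,b_n)} of N x N with all a_i + b_i odd, the determinant Delta_D(x,y) = det( x_i^{a_j} y_i^{b_j} )_{1 <= i,j <= n} is a diagonally B_n-alternating polynomial; and the collection of all such Delta_D, over all n-element subsets of the odd chessboard, is a linear basis of the space R^{+-} of diagonally B_n-alternating polynomials in Q[x,y]. -/

import Mathlib

open scoped Classical

/-- The hyperoctahedral group `B_n`, modeled as pairs (permutation, sign vector),
i.e. the wreath product `ℤ₂ ≀ S_n`.  `β.2 i = true` means the entry at position `i`
is negative. -/
abbrev HO (n : ℕ) := Equiv.Perm (Fin n) × (Fin n → Bool)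

namespace HO

/-- The inverse signed permutation. -/
noncomputable def inv {n : ℕ} (β : HO n) : HO n := (β.1⁻¹, fun i => β.2 (β.1⁻¹ i))

/-- One-line notation (1-indexed): the signed value `β(i) ∈ {±1,…,±n}` for `1 ≤ i ≤ n`,
and `0` outside this range. -/
noncomputable def val {n : ℕ} (β : HO n) (i : ℕ) : ℤ :=
  if h : 1 ≤ i ∧ i ≤ n then
    (if β.2 ⟨i - 1, by omega⟩ then -(((β.1 ⟨i - 1, by omega⟩ : Fin n) : ℕ) + 1 : ℤ)
     else (((β.1 ⟨i - 1, by omega⟩ : Fin n) : ℕ) + 1 : ℤ))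
  else 0

/-- The order `-1 ≺ -2 ≺ ⋯ ≺ -n ≺ ⋯ ≺ 0 ≺ 1 ≺ 2 ≺ ⋯` on `ℤ`:
`bprec a b` means `a ≺ b`. -/
noncomputable def bprec (a b : ℤ) : Prop :=
  (a < 0 ∧ b < 0 ∧ -a < -b) ∨ (a < 0 ∧ 0 ≤ b) ∨ (0 ≤ a ∧ 0 ≤ b ∧ a < b)

/-- Descent set of `β` with respect to the order `≺`. -/
noncomputable def Des {n : ℕ} (β : HO n) : Finset ℕ :=
  (Finset.Icc 1 (n - 1)).filter fun i => bprec (val β (i + 1)) (val β i)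

/-- Rise set of `β` with respect to the order `≺`. -/
noncomputable def Ris {n : ℕ} (β : HO n) : Finset ℕ :=
  (Finset.Icc 1 (n - 1)).filter fun i => bprec (val β i) (val β (i + 1))

/-- Major index. -/
noncomputable def maj {n : ℕ} (β : HO n) : ℕ := ∑ i ∈ Des β, i

/-- Number of negative entries. -/
noncomputable def neg {n : ℕ} (β : HO n) : ℕ :=
  ((Finset.Icc 1 n).filter fun i => val β i < 0).card

/-- The flag-major index `fmaj β = 2 maj β + neg β`. -/
noncomputable def fmaj {n : ℕ} (β : HO n) : ℕ := 2 * maj β + neg β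

/-- `δ_i(β) = #{j ∈ Des(β) : j < i}`. -/
noncomputable def deltaStat {n : ℕ} (β : HO n) (i : ℕ) : ℕ := ((Des β).filter fun j => j < i).card

/-- `d_i(β) = #{j ∈ Des(β) : j ≥ i}`. -/
noncomputable def dStat {n : ℕ} (β : HO n) (i : ℕ) : ℕ := ((Des β).filter fun j => i ≤ j).card

/-- `ε_i(β) = 1` if `β(i) < 0`, else `0`. -/
noncomputable def epsStat {n : ℕ} (β : HO n) (i : ℕ) : ℕ := if val β i < 0 then 1 else 0

/-- `η_i(β) = 1` if `β(i) > 0`, else `0`. -/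
noncomputable def etaStat {n : ℕ} (β : HO n) (i : ℕ) : ℕ := if 0 < val β i then 1 else 0

/-- `g_i(β) = 2 δ_i(β) + η_i(β)`. -/
noncomputable def gstat {n : ℕ} (β : HO n) (i : ℕ) : ℕ := 2 * deltaStat β i + etaStat β i

/-- `f_i(β) = 2 d_i(β) + ε_i(β)` (so that `fmaj β = ∑ f_i(β)`). -/
noncomputable def fStat {n : ℕ} (β : HO n) (i : ℕ) : ℕ := 2 * dStat β i + epsStat β i

/-- `μ_i(β) = #{k ∈ Ris(β⁻¹) : k < i}`. -/
noncomputable def muStat {n : ℕ} (β : HO n) (i : ℕ) : ℕ := ((Ris (inv β)).filter fun k => k < i).card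

/-- `ĝ_i(β) = 2 μ_{σ(i)}(β) + ε_i(β)`, where `σ(i) = |β(i)|`. -/
noncomputable def ghat {n : ℕ} (β : HO n) (i : ℕ) : ℕ :=
  2 * muStat β (val β i).natAbs + epsStat β i

end HO

/-- The diagonal action of `β ∈ B_n` on `ℚ[x_1,…,x_n,y_1,…,y_n]`
(`x_i = X (inl i)`, `y_i = X (inr i)`): `β · p(x,y) = p(β·x, β·y)`. -/
noncomputable def actD {n : ℕ} (β : HO n) :
    MvPolynomial (Fin n ⊕ Fin n) ℚ →ₐ[ℚ] MvPolynomial (Fin n ⊕ Fin n) ℚ :=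
  MvPolynomial.aeval fun v =>
    match v with
    | Sum.inl i => (if β.2 i then -1 else 1) * MvPolynomial.X (Sum.inl (β.1 i))
    | Sum.inr i => (if β.2 i then -1 else 1) * MvPolynomial.X (Sum.inr (β.1 i))

/-- The determinant of `β ∈ B_n` viewed as a linear transformation on `ℚ^n`. -/
noncomputable def detHO {n : ℕ} (β : HO n) : ℚ :=
  ((Equiv.Perm.sign β.1 : ℤ) : ℚ) * (-1) ^ (Finset.univ.filter fun i => β.2 i).card

/-- The space `R^{B_n}` of diagonally `B_n`-invariant polynomials. -/
noncomputable def invD (n : ℕ) : Submodule ℚ (MvPolynomial (Fin n ⊕ Fin n) ℚ) where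
  carrier := {p | ∀ β : HO n, actD β p = p}
  add_mem' := by
    intro a b ha hb β
    simp only [map_add, ha β, hb β]
  zero_mem' := by intro β; simp
  smul_mem' := by
    intro c a ha β
    simp only [map_smul, ha β]

/-- The space `R^±` of diagonally `B_n`-alternating polynomials. -/
noncomputable def altD (n : ℕ) : Submodule ℚ (MvPolynomial (Fin n ⊕ Fin n) ℚ) where
  carrier := {p | ∀ β : HO n, actD β p = MvPolynomial.C (detHO β) * p}
  add_mem' := by
    intro a b ha hb β
    simp only [map_add, ha β, hb β, mul_add]
  zero_mem' := by intro β; simp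
  smul_mem' := by
    intro c a ha β
    simp only [map_smul, ha β, mul_smul_comm]

/-- The weight giving the bigrading of `ℚ[x,y]` by bidegree: `x`-variables have
weight `(1,0)` and `y`-variables weight `(0,1)`. -/
noncomputable def biWeight (n : ℕ) : Fin n ⊕ Fin n → ℕ × ℕ :=
  fun v => match v with
    | Sum.inl _ => (1, 0)
    | Sum.inr _ => (0, 1)

/-- `o`-diagrams: `n`-element subsets of the odd chessboard
`{(a,b) : a + b odd}`, listed in strictly increasing lexicographic order. -/
noncomputable def ODiag (n : ℕ) : Type :=
  {D : Fin n → ℕ × ℕ // (StrictMono fun i => toLex (D i)) ∧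
    ∀ i, ((D i).1 + (D i).2) % 2 = 1}

/-- The determinant `Δ_D(x,y) = det(x_i^{a_j} y_i^{b_j})` associated to a diagram `D`. -/
noncomputable def DeltaD {n : ℕ} (D : Fin n → ℕ × ℕ) : MvPolynomial (Fin n ⊕ Fin n) ℚ :=
  Matrix.det fun i j : Fin n =>
    MvPolynomial.X (Sum.inl i) ^ (D j).1 * MvPolynomial.X (Sum.inr i) ^ (D j).2

open MvPolynomial

section Aux
variable {n : ℕ}

noncomputable def mOf (f : Fin n → ℕ × ℕ) : (Fin n ⊕ Fin n) →₀ ℕ :=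
  Finsupp.equivFunOnFinite.symm (Sum.elim (fun i => (f i).1) (fun i => (f i).2))

@[simp] lemma mOf_inl (f : Fin n → ℕ × ℕ) (i : Fin n) : mOf f (Sum.inl i) = (f i).1 := rfl
@[simp] lemma mOf_inr (f : Fin n → ℕ × ℕ) (i : Fin n) : mOf f (Sum.inr i) = (f i).2 := rfl

lemma mOf_injective : Function.Injective (mOf (n := n)) := by
  intro f g h
  funext i
  have h1 := congrArg (fun m => m (Sum.inl i)) h
  have h2 := congrArg (fun m => m (Sum.inr i)) h
  simp only [mOf_inl, mOf_inr] at h1 h2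
  exact Prod.ext h1 h2

noncomputable def gOf (m : (Fin n ⊕ Fin n) →₀ ℕ) : Fin n → ℕ × ℕ :=
  fun i => (m (Sum.inl i), m (Sum.inr i))

@[simp] lemma mOf_gOf (m : (Fin n ⊕ Fin n) →₀ ℕ) : mOf (gOf m) = m := by
  ext v; cases v <;> rfl

lemma mOf_eq_sum (f : Fin n → ℕ × ℕ) :
    mOf f = ∑ i : Fin n,
      (Finsupp.single (Sum.inl i) (f i).1 + Finsupp.single (Sum.inr i) (f i).2) := by
  ext v
  cases v with
  | inl j => simp [Finsupp.finset_sum_apply, Finsupp.single_apply]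
  | inr j => simp [Finsupp.finset_sum_apply, Finsupp.single_apply]

lemma monomial_mOf_eq (f : Fin n → ℕ × ℕ) (c : ℚ) :
    (monomial (mOf f) c : MvPolynomial (Fin n ⊕ Fin n) ℚ) =
      C c * ∏ i : Fin n, (X (Sum.inl i)) ^ (f i).1 * (X (Sum.inr i)) ^ (f i).2 := by
  rw [mOf_eq_sum, monomial_sum_index]
  congr 1
  refine Finset.prod_congr rfl fun i _ => ?_
  rw [X_pow_eq_monomial, X_pow_eq_monomial, monomial_mul, one_mul]

/-- The sign of entry `i` of `β`, as a rational. -/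
noncomputable def sgn (β : HO n) (i : Fin n) : ℚ := if β.2 i then -1 else 1

lemma actD_X_inl (β : HO n) (i : Fin n) :
    actD β (X (Sum.inl i) : MvPolynomial (Fin n ⊕ Fin n) ℚ)
      = C (sgn β i) * X (Sum.inl (β.1 i)) := by
  simp only [actD, aeval_X, sgn]
  split <;> simp

lemma actD_X_inr (β : HO n) (i : Fin n) :
    actD β (X (Sum.inr i) : MvPolynomial (Fin n ⊕ Fin n) ℚ)
      = C (sgn β i) * X (Sum.inr (β.1 i)) := by
  simp only [actD, aeval_X, sgn]
  split <;> simp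

lemma actD_monomial_mOf (β : HO n) (f : Fin n → ℕ × ℕ) (c : ℚ) :
    actD β (monomial (mOf f) c) =
      C (∏ i : Fin n, sgn β i ^ ((f i).1 + (f i).2)) *
        monomial (mOf (f ∘ ⇑β.1⁻¹)) c := by
  rw [monomial_mOf_eq, map_mul, map_prod]
  have hC : actD β (C c : MvPolynomial (Fin n ⊕ Fin n) ℚ) = C c := by
    simpa using (actD β).commutes c
  rw [hC]
  have step : ∀ i : Fin n,
      actD β ((X (Sum.inl i)) ^ (f i).1 * (X (Sum.inr i)) ^ (f i).2) =
        C (sgn β i ^ ((f i).1 + (f i).2)) *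
          ((X (Sum.inl (β.1 i))) ^ (f i).1 * (X (Sum.inr (β.1 i))) ^ (f i).2) := by
    intro i
    rw [map_mul, map_pow, map_pow, actD_X_inl, actD_X_inr, mul_pow, mul_pow,
      ← map_pow, ← map_pow, pow_add, map_mul]
    ring
  rw [Finset.prod_congr rfl fun i _ => step i, Finset.prod_mul_distrib, ← map_prod]
  have reidx : ∏ i : Fin n, ((X (Sum.inl (β.1 i)) : MvPolynomial (Fin n ⊕ Fin n) ℚ))
        ^ (f i).1 * (X (Sum.inr (β.1 i))) ^ (f i).2
      = ∏ j : Fin n, (X (Sum.inl j) : MvPolynomial (Fin n ⊕ Fin n) ℚ)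
        ^ ((f ∘ ⇑β.1⁻¹) j).1 * (X (Sum.inr j)) ^ ((f ∘ ⇑β.1⁻¹) j).2 := by
    rw [← Equiv.prod_comp β.1 (fun j => (X (Sum.inl j) : MvPolynomial (Fin n ⊕ Fin n) ℚ)
      ^ ((f ∘ ⇑β.1⁻¹) j).1 * (X (Sum.inr j)) ^ ((f ∘ ⇑β.1⁻¹) j).2)]
    refine Finset.prod_congr rfl fun i _ => ?_
    simp
  rw [reidx, monomial_mOf_eq]
  ring

end Aux
section Aux2
variable {n : ℕ}

@[simp] lemma gOf_mOf (f : Fin n → ℕ × ℕ) : gOf (mOf f) = f := by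
  funext i; exact Prod.ext rfl rfl

lemma coeff_actD (β : HO n) (g : Fin n → ℕ × ℕ) (p : MvPolynomial (Fin n ⊕ Fin n) ℚ) :
    coeff (mOf g) (actD β p) =
      (∏ i : Fin n, sgn β i ^ ((g (β.1 i)).1 + (g (β.1 i)).2)) *
        coeff (mOf (g ∘ ⇑β.1)) p := by
  set F : ℚ := ∏ i : Fin n, sgn β i ^ ((g (β.1 i)).1 + (g (β.1 i)).2) with hF
  have key : ∀ m ∈ p.support, coeff (mOf g) (actD β (monomial m (coeff m p))) =
      if m = mOf (g ∘ ⇑β.1) then F * coeff (mOf (g ∘ ⇑β.1)) p else 0 := by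
    intro m _
    by_cases h : m = mOf (g ∘ ⇑β.1)
    · subst h
      rw [if_pos rfl, actD_monomial_mOf]
      have h1 : (g ∘ ⇑β.1) ∘ ⇑β.1⁻¹ = g := by
        funext j; simp
      rw [h1, coeff_C_mul, coeff_monomial, if_pos rfl]
      simp only [Function.comp_apply, hF]
    · rw [if_neg h]
      conv_lhs => rw [← mOf_gOf m, actD_monomial_mOf]
      rw [coeff_C_mul, coeff_monomial]
      rw [if_neg, mul_zero]
      intro hc
      apply h
      have : gOf m ∘ ⇑β.1⁻¹ = g := mOf_injective hc
      have h2 : gOf m = g ∘ ⇑β.1 := by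
        funext j
        have := congrFun this (β.1 j)
        simpa using this
      rw [← mOf_gOf m, h2]
  conv_lhs => rw [p.as_sum, map_sum]
  rw [coeff_sum, Finset.sum_congr rfl key, Finset.sum_ite_eq' p.support (mOf (g ∘ ⇑β.1))]
  split_ifs with h
  · rfl
  · rw [MvPolynomial.notMem_support_iff.mp h, mul_zero]

lemma altD_coeff_perm {p : MvPolynomial (Fin n ⊕ Fin n) ℚ} (hp : p ∈ altD n)
    (g : Fin n → ℕ × ℕ) (σ : Equiv.Perm (Fin n)) :
    coeff (mOf (g ∘ ⇑σ)) p = ((Equiv.Perm.sign σ : ℤ) : ℚ) * coeff (mOf g) p := by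
  have h := hp (σ, fun _ => false)
  have h2 := congrArg (coeff (mOf g)) h
  rw [coeff_actD, coeff_C_mul] at h2
  have hs : ∀ i : Fin n, sgn ((σ, fun _ => false) : HO n) i = 1 := fun i => rfl
  simp only [hs, one_pow, Finset.prod_const_one, one_mul] at h2
  have hdet : detHO ((σ, fun _ => false) : HO n) = ((Equiv.Perm.sign σ : ℤ) : ℚ) := by
    simp [detHO]
  rw [hdet] at h2
  exact h2

lemma altD_coeff_flip {p : MvPolynomial (Fin n ⊕ Fin n) ℚ} (hp : p ∈ altD n)
    (g : Fin n → ℕ × ℕ) (i : Fin n) (hne : coeff (mOf g) p ≠ 0) :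
    ((g i).1 + (g i).2) % 2 = 1 := by
  set β : HO n := (1, fun j => decide (j = i)) with hβ
  have h := hp β
  have h2 := congrArg (coeff (mOf g)) h
  rw [coeff_actD, coeff_C_mul] at h2
  have hg : g ∘ ⇑(β.1) = g := by funext j; simp [hβ]
  rw [hg] at h2
  have hprod : (∏ j : Fin n, sgn β j ^ ((g (β.1 j)).1 + (g (β.1 j)).2)) =
      (-1 : ℚ) ^ ((g i).1 + (g i).2) := by
    rw [Finset.prod_eq_single i]
    · simp [hβ, sgn]
    · intro j _ hj
      have : sgn β j = 1 := by simp [hβ, sgn, hj]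
      rw [this, one_pow]
    · simp
  have hdet : detHO β = -1 := by
    have hcard : (Finset.univ.filter fun j => β.2 j).card = 1 := by
      have : (Finset.univ.filter fun j : Fin n => β.2 j) = {i} := by
        ext j; simp [hβ]
      rw [this, Finset.card_singleton]
    rw [detHO]
    have h1 : (Equiv.Perm.sign (β.1) : ℤ) = 1 := by simp [hβ]
    have h2' : (Finset.univ.filter fun j => β.2 j).card = 1 := hcard
    rw [h2', h1]
    norm_num
  rw [hprod, hdet] at h2
  by_contra hodd
  have heven : Even ((g i).1 + (g i).2) := by
    rcases Nat.even_or_odd ((g i).1 + (g i).2) with he | ho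
    · exact he
    · exact absurd (Nat.odd_iff.mp ho) hodd
  rw [heven.neg_one_pow, one_mul] at h2
  have : (2 : ℚ) * coeff (mOf g) p = 0 := by linarith [h2]
  simpa [hne] using this

lemma altD_coeff_rep {p : MvPolynomial (Fin n ⊕ Fin n) ℚ} (hp : p ∈ altD n)
    (g : Fin n → ℕ × ℕ) (i j : Fin n) (hij : i ≠ j) (hg : g i = g j) :
    coeff (mOf g) p = 0 := by
  have hgs : g ∘ ⇑(Equiv.swap i j) = g := by
    funext k
    rcases eq_or_ne k i with rfl | hki
    · simp [Equiv.swap_apply_left, hg]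
    rcases eq_or_ne k j with rfl | hkj
    · simp [Equiv.swap_apply_right, hg]
    · simp [Equiv.swap_apply_of_ne_of_ne hki hkj]
  have h := altD_coeff_perm hp g (Equiv.swap i j)
  rw [hgs, Equiv.Perm.sign_swap hij] at h
  push_cast at h
  linarith [h]

end Aux2
section Aux3
variable {n : ℕ}

lemma DeltaD_eq (f : Fin n → ℕ × ℕ) :
    DeltaD f = ∑ σ : Equiv.Perm (Fin n),
      monomial (mOf (f ∘ ⇑σ)) (((Equiv.Perm.sign σ : ℤ)) : ℚ) := by
  rw [DeltaD, show (Matrix.det fun i j : Fin n => (X (Sum.inl i) : MvPolynomial (Fin n ⊕ Fin n) ℚ) ^ (f j).1 * X (Sum.inr i) ^ (f j).2) = Matrix.det (Matrix.of fun i j : Fin n => (X (Sum.inl i) : MvPolynomial (Fin n ⊕ Fin n) ℚ) ^ (f j).1 * X (Sum.inr i) ^ (f j).2) from rfl, Matrix.det_apply']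
  simp only [Matrix.of_apply]
  have term : ∀ σ : Equiv.Perm (Fin n),
      (Equiv.Perm.sign σ : ℤ) * ∏ i : Fin n,
          (X (Sum.inl (σ i)) : MvPolynomial (Fin n ⊕ Fin n) ℚ) ^ (f i).1 *
            (X (Sum.inr (σ i))) ^ (f i).2
        = monomial (mOf (f ∘ ⇑σ⁻¹)) (((Equiv.Perm.sign σ : ℤ)) : ℚ) := by
    intro σ
    have hprod : (∏ i : Fin n,
        (X (Sum.inl (σ i)) : MvPolynomial (Fin n ⊕ Fin n) ℚ) ^ (f i).1 *
          (X (Sum.inr (σ i))) ^ (f i).2)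
        = ∏ j : Fin n, (X (Sum.inl j) : MvPolynomial (Fin n ⊕ Fin n) ℚ)
            ^ ((f ∘ ⇑σ⁻¹) j).1 * (X (Sum.inr j)) ^ ((f ∘ ⇑σ⁻¹) j).2 := by
      rw [← Equiv.prod_comp σ (fun j => (X (Sum.inl j) : MvPolynomial (Fin n ⊕ Fin n) ℚ)
        ^ ((f ∘ ⇑σ⁻¹) j).1 * (X (Sum.inr j)) ^ ((f ∘ ⇑σ⁻¹) j).2)]
      refine Finset.prod_congr rfl fun i _ => ?_
      simp
    rw [hprod]
    have hc : ((Equiv.Perm.sign σ : ℤ) : MvPolynomial (Fin n ⊕ Fin n) ℚ)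
        = C (((Equiv.Perm.sign σ : ℤ)) : ℚ) := by
      push_cast
      simp
    rw [hc, ← monomial_mOf_eq]
  rw [Finset.sum_congr rfl fun σ _ => term σ]
  rw [← Equiv.sum_comp (Equiv.inv (Equiv.Perm (Fin n)))
    (fun σ => monomial (mOf (f ∘ ⇑σ)) (((Equiv.Perm.sign σ : ℤ)) : ℚ))]
  refine Finset.sum_congr rfl fun σ _ => ?_
  simp [Equiv.Perm.sign_inv]

lemma coeff_DeltaD (f : Fin n → ℕ × ℕ) (hf : Function.Injective f) (τ : Equiv.Perm (Fin n)) :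
    coeff (mOf (f ∘ ⇑τ)) (DeltaD f) = ((Equiv.Perm.sign τ : ℤ) : ℚ) := by
  rw [DeltaD_eq, coeff_sum]
  have key : ∀ σ : Equiv.Perm (Fin n),
      coeff (mOf (f ∘ ⇑τ)) (monomial (mOf (f ∘ ⇑σ)) (((Equiv.Perm.sign σ : ℤ)) : ℚ)) =
        if σ = τ then ((Equiv.Perm.sign σ : ℤ) : ℚ) else 0 := by
    intro σ
    rw [coeff_monomial]
    congr 1
    simp only [eq_iff_iff]
    constructor
    · intro h
      have := mOf_injective h
      exact Equiv.ext fun i => hf (congrFun this i)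
    · rintro rfl; rfl
  rw [Finset.sum_congr rfl fun σ _ => key σ, Finset.sum_ite_eq' Finset.univ τ]
  simp

lemma coeff_DeltaD_zero (f : Fin n → ℕ × ℕ) (g : Fin n → ℕ × ℕ)
    (hg : ∀ σ : Equiv.Perm (Fin n), g ≠ f ∘ ⇑σ) :
    coeff (mOf g) (DeltaD f) = 0 := by
  rw [DeltaD_eq, coeff_sum]
  refine Finset.sum_eq_zero fun σ _ => ?_
  rw [coeff_monomial, if_neg]
  intro h
  exact hg σ (mOf_injective h).symm

lemma DeltaD_mem_altD (f : Fin n → ℕ × ℕ) (hodd : ∀ i, ((f i).1 + (f i).2) % 2 = 1) :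
    DeltaD f ∈ altD n := by
  intro β
  set S : ℚ := (-1 : ℚ) ^ (Finset.univ.filter fun i => β.2 i).card with hS
  have hsgnprod : (∏ i : Fin n, sgn β i) = S := by
    rw [hS, ← Finset.prod_filter_mul_prod_filter_not Finset.univ (fun i => β.2 i) (sgn β)]
    have h1 : ∀ i ∈ Finset.univ.filter fun i => β.2 i, sgn β i = -1 := by
      intro i hi
      simp only [Finset.mem_filter] at hi
      simp [sgn, hi.2]
    have h2 : ∀ i ∈ Finset.univ.filter fun i => ¬ β.2 i, sgn β i = 1 := by
      intro i hi
      simp only [Finset.mem_filter] at hi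
      simp [sgn, hi.2]
    rw [Finset.prod_congr rfl h1, Finset.prod_congr rfl h2, Finset.prod_const,
      Finset.prod_const, one_pow, mul_one]
  have term : ∀ σ : Equiv.Perm (Fin n),
      actD β (monomial (mOf (f ∘ ⇑σ)) (((Equiv.Perm.sign σ : ℤ)) : ℚ)) =
        monomial (mOf (f ∘ ⇑(σ * β.1⁻¹))) (S * ((Equiv.Perm.sign σ : ℤ) : ℚ)) := by
    intro σ
    rw [actD_monomial_mOf]
    have hfac : (∏ i : Fin n, sgn β i ^ (((f ∘ ⇑σ) i).1 + ((f ∘ ⇑σ) i).2)) = S := by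
      rw [← hsgnprod]
      refine Finset.prod_congr rfl fun i _ => ?_
      have hoddi : Odd ((f (σ i)).1 + (f (σ i)).2) := Nat.odd_iff.mpr (hodd _)
      by_cases hb : β.2 i
      · simp only [sgn, if_pos hb]
        exact hoddi.neg_one_pow
      · simp only [sgn, if_neg hb, one_pow]
    have hcomp : (f ∘ ⇑σ) ∘ ⇑β.1⁻¹ = f ∘ ⇑(σ * β.1⁻¹) := rfl
    rw [hfac, hcomp, C_mul_monomial]
  have hre : ∑ σ : Equiv.Perm (Fin n),
      monomial (mOf (f ∘ ⇑(σ * β.1⁻¹))) (S * ((Equiv.Perm.sign σ : ℤ) : ℚ))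
      = ∑ τ : Equiv.Perm (Fin n),
        monomial (mOf (f ∘ ⇑τ)) (S * ((Equiv.Perm.sign (τ * β.1) : ℤ) : ℚ)) := by
    rw [← Equiv.sum_comp (Equiv.mulRight β.1⁻¹)
      (fun τ => monomial (mOf (f ∘ ⇑τ)) (S * ((Equiv.Perm.sign (τ * β.1) : ℤ) : ℚ)))]
    refine Finset.sum_congr rfl fun σ _ => ?_
    simp only [Equiv.coe_mulRight, inv_mul_cancel_right]
  rw [DeltaD_eq, map_sum, Finset.sum_congr rfl fun σ _ => term σ, hre,
    Finset.mul_sum]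
  refine Finset.sum_congr rfl fun σ _ => ?_
  rw [C_mul_monomial]
  congr 1
  rw [detHO, ← hS, Equiv.Perm.sign_mul]
  push_cast
  ring

end Aux3
section Aux4
variable {n : ℕ}

lemma ODiag_fst_injective (D : ODiag n) : Function.Injective D.1 := by
  intro i j h
  exact D.2.1.injective (show toLex (D.1 i) = toLex (D.1 j) from by rw [h])

lemma ODiag_eq_of_comp (D D' : ODiag n) (σ : Equiv.Perm (Fin n))
    (h : D.1 = D'.1 ∘ ⇑σ) : D = D' := by
  have hrange : Set.range (fun i => toLex (D.1 i)) = Set.range (fun i => toLex (D'.1 i)) := by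
    ext x
    simp only [Set.mem_range]
    constructor
    · rintro ⟨i, rfl⟩
      exact ⟨σ i, by rw [h]; rfl⟩
    · rintro ⟨i, rfl⟩
      exact ⟨σ⁻¹ i, by rw [h]; simp⟩
  have hm1 : StrictMono fun i => toLex (D.1 i) := D.2.1
  have hm2 : StrictMono fun i => toLex (D'.1 i) := D'.2.1
  have inst : WellFoundedLT (Fin n) := inferInstance
  have := (@StrictMono.range_inj (Fin n) (Lex (ℕ × ℕ)) _ _ inst _ _ hm1 hm2).mp hrange
  have hD : D.1 = D'.1 := by
    funext i
    have := congrFun this i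
    exact toLex.injective this
  exact Subtype.ext hD

lemma exists_ODiag (g : Fin n → ℕ × ℕ) (hinj : Function.Injective g)
    (hodd : ∀ i, ((g i).1 + (g i).2) % 2 = 1) :
    ∃ (D : ODiag n) (σ : Equiv.Perm (Fin n)), g = D.1 ∘ ⇑σ := by
  set g' : Fin n → Lex (ℕ × ℕ) := fun i => toLex (g i) with hg'
  have hg'inj : Function.Injective g' := fun i j h => hinj (toLex.injective h)
  set s : Finset (Lex (ℕ × ℕ)) := Finset.image g' Finset.univ with hs
  have hcard : s.card = n := by
    rw [hs, Finset.card_image_of_injective _ hg'inj, Finset.card_univ, Fintype.card_fin]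
  set e := s.orderIsoOfFin hcard with he
  set f : Fin n → ℕ × ℕ := fun i => ofLex (e i : Lex (ℕ × ℕ)) with hf
  have hmono : StrictMono fun i => toLex (f i) := by
    intro i j hij
    have : (e i : Lex (ℕ × ℕ)) < e j := e.strictMono hij
    simpa [hf] using this
  have hfodd : ∀ i, ((f i).1 + (f i).2) % 2 = 1 := by
    intro i
    have hmem : (e i : Lex (ℕ × ℕ)) ∈ Finset.image g' Finset.univ := (e i).2
    rw [Finset.mem_image] at hmem
    obtain ⟨j, _, hj⟩ := hmem
    have hfg : f i = g j := toLex.injective hj.symm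
    have := hodd j
    rw [← hfg] at this
    exact this
  have hmem : ∀ i, g' i ∈ s := fun i => Finset.mem_image_of_mem g' (Finset.mem_univ i)
  set e₁ : Fin n → {x // x ∈ s} := fun i => ⟨g' i, hmem i⟩ with he₁
  have he₁inj : Function.Injective e₁ := by
    intro i j h
    exact hg'inj (congrArg Subtype.val h)
  have he₁bij : Function.Bijective e₁ := by
    have : Fintype.card {x // x ∈ s} = Fintype.card (Fin n) := by
      rw [Fintype.card_coe, hcard, Fintype.card_fin]
    exact (Fintype.bijective_iff_injective_and_card e₁).mpr ⟨he₁inj, this.symm⟩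
  set σ : Equiv.Perm (Fin n) := (Equiv.ofBijective e₁ he₁bij).trans e.toEquiv.symm with hσ
  refine ⟨⟨f, hmono, hfodd⟩, σ, ?_⟩
  funext i
  have h1 : e (σ i) = e₁ i := by
    rw [hσ]
    simp
  have : toLex (f (σ i)) = g' i := by
    rw [hf]
    simp only [toLex_ofLex]
    rw [h1, he₁]
  exact (toLex.injective this).symm

end Aux4
section Main
variable {n : ℕ}

lemma span_aux (k : ℕ) : ∀ p ∈ altD n, p.support.card ≤ k →
    p ∈ Submodule.span ℚ (Set.range fun D : ODiag n => DeltaD D.1) := by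
  induction k with
  | zero =>
    intro p _ hcard
    have : p.support = ∅ := Finset.card_eq_zero.mp (Nat.le_zero.mp hcard)
    rw [MvPolynomial.support_eq_empty.mp this]
    exact Submodule.zero_mem _
  | succ k ih =>
    intro p hp hcard
    by_cases hp0 : p = 0
    · rw [hp0]; exact Submodule.zero_mem _
    obtain ⟨m, hm⟩ := (MvPolynomial.support_nonempty.mpr hp0)
    set g : Fin n → ℕ × ℕ := gOf m with hg
    have hcg : coeff (mOf g) p ≠ 0 := by
      rw [hg, mOf_gOf]
      exact MvPolynomial.mem_support_iff.mp hm
    have ginj : Function.Injective g := by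
      intro i j hij
      by_contra hne
      exact hcg (altD_coeff_rep hp g i j hne hij)
    have godd : ∀ i, ((g i).1 + (g i).2) % 2 = 1 := fun i => altD_coeff_flip hp g i hcg
    obtain ⟨D, σ, hDσ⟩ := exists_ODiag g ginj godd
    set c : ℚ := coeff (mOf D.1) p with hc
    have hcs : coeff (mOf g) p = ((Equiv.Perm.sign σ : ℤ) : ℚ) * c := by
      rw [hDσ]
      exact altD_coeff_perm hp D.1 σ
    have hc0 : c ≠ 0 := by
      intro h
      rw [h, mul_zero] at hcs
      exact hcg hcs
    set q : MvPolynomial (Fin n ⊕ Fin n) ℚ := p - c • DeltaD D.1 with hq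
    have hqalt : q ∈ altD n :=
      Submodule.sub_mem _ hp (Submodule.smul_mem _ _ (DeltaD_mem_altD D.1 D.2.2))
    have hsub : q.support ⊆ p.support \ {m} := by
      intro m' hm'
      have hm'c : coeff m' q ≠ 0 := MvPolynomial.mem_support_iff.mp hm'
      have hqc : coeff m' q = coeff m' p - c * coeff m' (DeltaD D.1) := by
        rw [hq, MvPolynomial.coeff_sub, MvPolynomial.coeff_smul, smul_eq_mul]
      have hpne : coeff m' p ≠ 0 := by
        intro hpe
        by_cases hD : ∀ τ : Equiv.Perm (Fin n), gOf m' ≠ D.1 ∘ ⇑τ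
        · have : coeff m' (DeltaD D.1) = 0 := by
            rw [← mOf_gOf m']
            exact coeff_DeltaD_zero D.1 (gOf m') hD
          rw [hqc, hpe, this, mul_zero, sub_zero] at hm'c
          exact hm'c rfl
        · push_neg at hD
          obtain ⟨τ, hτ⟩ := hD
          have : coeff m' p = ((Equiv.Perm.sign τ : ℤ) : ℚ) * c := by
            rw [← mOf_gOf m', hτ]
            exact altD_coeff_perm hp D.1 τ
          rw [hpe] at this
          have : c = 0 := by
            rcases Int.units_eq_one_or (Equiv.Perm.sign τ) with h | h <;>
              · rw [h] at this; push_cast at this; linarith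
          exact hc0 this
      have hmne : m' ≠ m := by
        intro h
        subst h
        rw [hqc] at hm'c
        have hΔ : coeff m' (DeltaD D.1) = ((Equiv.Perm.sign σ : ℤ) : ℚ) := by
          rw [← mOf_gOf m', show gOf m' = D.1 ∘ ⇑σ from hDσ]
          exact coeff_DeltaD D.1 (ODiag_fst_injective D) σ
        rw [show coeff m' p = coeff (mOf g) p from by rw [hg, mOf_gOf], hcs, hΔ] at hm'c
        simp at hm'c
        exact hm'c (by ring)
      exact Finset.mem_sdiff.mpr ⟨MvPolynomial.mem_support_iff.mpr hpne,
        by simpa using hmne⟩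
    have hqcard : q.support.card ≤ k := by
      have h1 : (p.support \ {m}).card = p.support.card - 1 := by
        rw [Finset.card_sdiff_of_subset (Finset.singleton_subset_iff.mpr hm), Finset.card_singleton]
      have h2 := Finset.card_le_card hsub
      omega
    have hqspan := ih q hqalt hqcard
    have : p = q + c • DeltaD D.1 := by rw [hq]; ring
    rw [this]
    exact Submodule.add_mem _ hqspan (Submodule.smul_mem _ _
      (Submodule.subset_span ⟨D, rfl⟩))

end Main
/-- each `Δ_D` with `D` an `n`-element subset of the odd chessboard is
diagonally `B_n`-alternating, and together they form a linear basis of the space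
`R^±` of diagonally `B_n`-alternating polynomials. -/
theorem DeltaD_basis_of_alternants (n : ℕ) :
    (∀ D : ODiag n, DeltaD D.1 ∈ altD n) ∧
    LinearIndependent ℚ (fun D : ODiag n => DeltaD D.1) ∧
    Submodule.span ℚ (Set.range fun D : ODiag n => DeltaD D.1) = altD n := by
  have coeff_self : ∀ D : ODiag n, coeff (mOf D.1) (DeltaD D.1) = 1 := by
    intro D
    have h := coeff_DeltaD D.1 (ODiag_fst_injective D) 1
    have hcomp : D.1 ∘ ⇑(1 : Equiv.Perm (Fin n)) = D.1 := rfl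
    rw [hcomp] at h
    simpa using h
  have coeff_other : ∀ D D' : ODiag n, D' ≠ D → coeff (mOf D.1) (DeltaD D'.1) = 0 := by
    intro D D' hne
    rw [← mOf_gOf (mOf D.1), gOf_mOf]
    refine coeff_DeltaD_zero D'.1 D.1 fun τ h => ?_
    exact hne (ODiag_eq_of_comp D D' τ h).symm
  refine ⟨fun D => DeltaD_mem_altD D.1 D.2.2, ?_, ?_⟩
  · rw [linearIndependent_iff']
    intro s gc hsum D hD
    have h := congrArg (coeff (mOf D.1)) hsum
    rw [MvPolynomial.coeff_zero] at h
    rw [show coeff (mOf D.1) (∑ D' ∈ s, gc D' • DeltaD D'.1)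
        = ∑ D' ∈ s, gc D' * coeff (mOf D.1) (DeltaD D'.1) from by
      rw [MvPolynomial.coeff_sum]
      exact Finset.sum_congr rfl fun D' _ => by
        rw [MvPolynomial.coeff_smul, smul_eq_mul]] at h
    rw [Finset.sum_congr rfl (fun D' hD' => show gc D' * coeff (mOf D.1) (DeltaD D'.1)
        = if D' = D then gc D' else 0 from by
      by_cases hDD : D' = D
      · rw [if_pos hDD, hDD, coeff_self, mul_one]
      · rw [if_neg hDD, coeff_other D D' hDD, mul_zero]),
      Finset.sum_ite_eq' s D] at h
    rwa [if_pos hD] at h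
  · refine le_antisymm ?_ ?_
    · rw [Submodule.span_le]
      rintro _ ⟨D, rfl⟩
      exact DeltaD_mem_altD D.1 D.2.2
    · intro p hp
      exact span_aux p.support.card p hp le_rfl
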